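/- Let T be a triangulated category. Let (A, B, C, ∂, p, q) and (A, B₁, C₁, ∂₁, p₁, q₁) be distinguished triangles on the same first object A. Suppose given a morphism of distinguished triangles (𝟙_A, f, g) from (A, B, C, ∂, p, q) to (A, B₁, C₁, ∂₁, p₁, q₁) and a morphism of distinguished triangles (𝟙_A, θ, η) from (A, B₁, C₁, ∂₁, p₁, q₁) to (A, B, C, ∂, p, q), such that θ ∘ f = 𝟙_B and η ∘ g = 𝟙_C. If Hom_T(A, C₁⟦-1⟧) = 0, then there is a 'cross' isomorphism B₁ ⊕ C ≅ B ⊕ C₁. (Lemma 3.5 of the paper.) -/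

import Mathlib

open CategoryTheory CategoryTheory.Limits CategoryTheory.Pretriangulated

/-- Lemma 3.5: given two distinguished triangles on the same first object `A`, a morphism
of triangles `(𝟙 A, f, g)` one way and `(𝟙 A, θ, η)` the other way, with `θ ∘ f = 𝟙` and
`η ∘ g = 𝟙`, and `Hom(A, C₁⟦-1⟧) = 0`, there is a cross isomorphism `B₁ ⊞ C ≅ B ⊞ C₁`. -/
theorem cross_isomorphism
    (T : Type*) [Category T] [Preadditive T] [HasZeroObject T] [HasBinaryBiproducts T]
    [HasShift T ℤ] [∀ n : ℤ, (shiftFunctor T n).Additive] [Pretriangulated T]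
    [IsTriangulated T]
    (A B C B₁ C₁ : T)
    (d : A ⟶ B) (p : B ⟶ C) (q : C ⟶ A⟦(1:ℤ)⟧)
    (d₁ : A ⟶ B₁) (p₁ : B₁ ⟶ C₁) (q₁ : C₁ ⟶ A⟦(1:ℤ)⟧)
    (hT : Triangle.mk d p q ∈ distTriang T)
    (hT₁ : Triangle.mk d₁ p₁ q₁ ∈ distTriang T)
    -- the morphism of triangles (𝟙 A, f, g) from (A,B,C) to (A,B₁,C₁)
    (f : B ⟶ B₁) (g : C ⟶ C₁)
    (hf₁ : d ≫ f = 𝟙 A ≫ d₁) (hg₁ : p ≫ g = f ≫ p₁)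
    (hq₁ : q ≫ (𝟙 A)⟦(1:ℤ)⟧' = g ≫ q₁)
    -- the morphism of triangles (𝟙 A, θ, η) from (A,B₁,C₁) to (A,B,C)
    (θ : B₁ ⟶ B) (η : C₁ ⟶ C)
    (hθ₁ : d₁ ≫ θ = 𝟙 A ≫ d) (hη₁ : p₁ ≫ η = θ ≫ p)
    (hq₂ : q₁ ≫ (𝟙 A)⟦(1:ℤ)⟧' = η ≫ q)
    (hθf : f ≫ θ = 𝟙 B) (hηg : g ≫ η = 𝟙 C)
    (hzero : ∀ φ : A ⟶ C₁⟦(-1:ℤ)⟧, φ = 0) :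
    Nonempty (B₁ ⊞ C ≅ B ⊞ C₁) := by
  -- simplify the commutation with shifts of the identity
  have hdθ : d₁ ≫ θ = d := by simpa using hθ₁
  have hdf : d ≫ f = d₁ := by simpa using hf₁
  -- the idempotents
  set e : B₁ ⟶ B₁ := 𝟙 B₁ - θ ≫ f with he
  set e' : C₁ ⟶ C₁ := 𝟙 C₁ - η ≫ g with he'
  have hee : e ≫ e = e := by
    simp only [he, Preadditive.sub_comp, Preadditive.comp_sub, Category.id_comp,
      Category.comp_id, Category.assoc, reassoc_of% hθf]
    abel
  have he'e' : e' ≫ e' = e' := by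
    simp only [he', Preadditive.sub_comp, Preadditive.comp_sub, Category.id_comp,
      Category.comp_id, Category.assoc, reassoc_of% hηg]
    abel
  have heθ : e ≫ θ = 0 := by
    simp [he, Preadditive.sub_comp, reassoc_of% hθf, hθf]
  have hge' : g ≫ e' = 0 := by
    simp [he', Preadditive.comp_sub, reassoc_of% hηg, hηg]
  -- p₁ intertwines e and e'
  have hpe : p₁ ≫ e' = e ≫ p₁ := by
    simp only [he, he', Preadditive.comp_sub, Preadditive.sub_comp, Category.comp_id,
      Category.id_comp, Category.assoc]
    rw [reassoc_of% hη₁, ← hg₁]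
  -- d₁ ≫ e = 0, so e factors through p₁
  have hde : d₁ ≫ e = 0 := by
    simp [he, Preadditive.comp_sub, reassoc_of% hdθ, hdf]
  obtain ⟨b₀, hb₀⟩ : ∃ b₀ : C₁ ⟶ B₁, e = p₁ ≫ b₀ :=
    Triangle.yoneda_exact₂ _ hT₁ e hde
  -- b₀ ≫ p₁ = e' using the vanishing hypothesis
  have key : b₀ ≫ p₁ = e' := by
    have hp : p₁ ≫ (b₀ ≫ p₁ - e') = 0 := by
      rw [Preadditive.comp_sub, ← Category.assoc, ← hb₀, hpe, sub_self]
    obtain ⟨s, hs⟩ : ∃ s : A⟦(1:ℤ)⟧ ⟶ C₁, b₀ ≫ p₁ - e' = q₁ ≫ s :=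
      Triangle.yoneda_exact₃ _ hT₁ _ hp
    have hs0 : s = 0 := by
      have h1 : (shiftEquiv T (1:ℤ)).unitIso.hom.app A ≫
          (shiftFunctor T (-1:ℤ)).map s = 0 := hzero _
      have h2 : (shiftFunctor T (-1:ℤ)).map s = 0 := by
        exact (cancel_epi ((shiftEquiv T (1:ℤ)).unitIso.hom.app A)).mp
          (h1.trans comp_zero.symm)
      exact (shiftFunctor T (-1:ℤ)).map_injective (by simpa using h2)
    have h3 : b₀ ≫ p₁ - e' = 0 := by rw [hs, hs0, comp_zero]
    exact sub_eq_zero.mp h3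
  -- the correcting map b : C₁ ⟶ B₁
  set b : C₁ ⟶ B₁ := e' ≫ b₀ ≫ e with hb
  have hpb : p₁ ≫ b = e := by
    rw [hb, reassoc_of% hpe, ← reassoc_of% hb₀, ← Category.assoc, hee, hee]
  have hgb : g ≫ b = 0 := by
    rw [hb, ← Category.assoc, hge', zero_comp]
  have hbθ : b ≫ θ = 0 := by
    simp only [hb, Category.assoc, heθ, comp_zero]
  have hbp : b ≫ p₁ = e' := by
    rw [hb, Category.assoc, Category.assoc, ← hpe, reassoc_of% key,
      ← Category.assoc, he'e', he'e']
  -- the cross isomorphism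
  refine ⟨⟨biprod.desc (biprod.lift θ p₁) (biprod.lift 0 g),
    biprod.desc (biprod.lift f (-p)) (biprod.lift b η), ?_, ?_⟩⟩
  · ext
    · simp only [biprod.inl_desc_assoc, biprod.lift_desc, Preadditive.add_comp,
        Category.assoc, biprod.lift_fst, Category.comp_id, Category.id_comp,
        biprod.inl_fst, hpb, he]
      abel
    · simp [biprod.lift_desc, hη₁]
    · simp [biprod.lift_desc, hgb]
    · simp [biprod.lift_desc, hgb, hηg]
  · ext
    · simp [biprod.lift_desc, hθf]
    · simp [biprod.lift_desc, hg₁]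
    · simp [biprod.lift_desc, hbθ]
    · simp only [biprod.inr_desc_assoc, biprod.lift_desc, Preadditive.add_comp,
        Category.assoc, biprod.lift_snd, Category.comp_id, Category.id_comp,
        biprod.inr_snd, hbp, he']
      abel
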